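/- arXiv:0710.1103 — 3 statements merged into one kernel-verified Lean document; each statement's English description precedes it below -/
import Mathlib

section
/- Let F ∈ K[X,Y] be a squarefree polynomial divisible by neither X nor Y, and let σ1, σ2 be positive integers such that p ∤ σ1 and p ∤ σ2 (no divisibility condition when p = 0). Then the polynomial F(X^{σ1}, Y^{σ2}) ∈ K[X,Y] is squarefree. -/
open MvPolynomial

namespace SF3

variable {K : Type*} [Field K]

noncomputable def mr (a b : ℕ) : Fin 2 →₀ ℕ := Finsupp.single 0 a + Finsupp.single 1 b

@[simp] lemma mr_apply0 (a b : ℕ) : mr a b 0 = a := by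
  simp [mr, Finsupp.single_apply]

@[simp] lemma mr_apply1 (a b : ℕ) : mr a b 1 = b := by
  simp [mr, Finsupp.single_apply]

lemma mr_eq_self (m : Fin 2 →₀ ℕ) : mr (m 0) (m 1) = m := by
  ext i
  fin_cases i <;> simp

lemma mr_injective {a b a' b' : ℕ} (h : mr a b = mr a' b') : a = a' ∧ b = b' := by
  constructor
  · have := congrArg (fun f => f 0) h; simpa using this
  · have := congrArg (fun f => f 1) h; simpa using this

lemma monomial_mr (a b : ℕ) (c : K) :
    (monomial (mr a b) c : MvPolynomial (Fin 2) K) = C c * X 0 ^ a * X 1 ^ b := by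
  rw [mr, monomial_add_single, ← zero_add (Finsupp.single (0 : Fin 2) a), monomial_add_single,
    monomial_zero', mul_assoc]

lemma monomial_eq_mr (m : Fin 2 →₀ ℕ) (c : K) :
    (monomial m c : MvPolynomial (Fin 2) K) = C c * X 0 ^ (m 0) * X 1 ^ (m 1) := by
  rw [← monomial_mr, mr_eq_self]

/-- the substitution `X ↦ X^σ1, Y ↦ Y^σ2` as an algebra hom. -/
noncomputable def phi (σ1 σ2 : ℕ) :
    MvPolynomial (Fin 2) K →ₐ[K] MvPolynomial (Fin 2) K :=
  aeval ![X 0 ^ σ1, X 1 ^ σ2]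

@[simp] lemma phi_C (σ1 σ2 : ℕ) (c : K) : phi σ1 σ2 (C c) = C c := by
  simp [phi, algebraMap_eq]

@[simp] lemma phi_X0 (σ1 σ2 : ℕ) : phi σ1 σ2 (X 0 : MvPolynomial (Fin 2) K) = X 0 ^ σ1 := by
  simp [phi]

@[simp] lemma phi_X1 (σ1 σ2 : ℕ) : phi σ1 σ2 (X 1 : MvPolynomial (Fin 2) K) = X 1 ^ σ2 := by
  simp [phi]

lemma phi_monomial (σ1 σ2 : ℕ) (m : Fin 2 →₀ ℕ) (c : K) :
    phi σ1 σ2 (monomial m c) = monomial (mr (σ1 * m 0) (σ2 * m 1)) c := by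
  rw [monomial_eq_mr, map_mul, map_mul, map_pow, map_pow, phi_C, phi_X0, phi_X1,
    ← pow_mul, ← pow_mul, monomial_mr]

/-- the scaling `X ↦ cX, Y ↦ dY` as an algebra hom. -/
noncomputable def delta (c d : K) :
    MvPolynomial (Fin 2) K →ₐ[K] MvPolynomial (Fin 2) K :=
  aeval ![C c * X 0, C d * X 1]

@[simp] lemma delta_C (c d : K) (a : K) : delta c d (C a) = C a := by
  simp [delta, algebraMap_eq]

@[simp] lemma delta_X0 (c d : K) : delta c d (X 0 : MvPolynomial (Fin 2) K) = C c * X 0 := by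
  simp [delta]

@[simp] lemma delta_X1 (c d : K) : delta c d (X 1 : MvPolynomial (Fin 2) K) = C d * X 1 := by
  simp [delta]

lemma delta_monomial (c d : K) (m : Fin 2 →₀ ℕ) (a : K) :
    delta c d (monomial m a) = monomial m (a * c ^ m 0 * d ^ m 1) := by
  rw [monomial_eq_mr, map_mul, map_mul, map_pow, map_pow, delta_C, delta_X0, delta_X1,
    mul_pow, mul_pow, ← C_pow, ← C_pow, monomial_eq_mr (c := a * c ^ m 0 * d ^ m 1)]
  simp only [C_mul]
  ring

lemma delta_delta (c d c' d' : K) (P : MvPolynomial (Fin 2) K) :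
    delta c d (delta c' d' P) = delta (c * c') (d * d') P := by
  have : (delta c d).comp (delta c' d') = delta (K := K) (c * c') (d * d') := by
    apply algHom_ext
    intro i
    fin_cases i <;>
      · simp only [Fin.isValue, AlgHom.comp_apply, Fin.zero_eta, Fin.mk_one, delta_X0, delta_X1,
          map_mul, delta_C, C_mul]
        ring
  exact DFunLike.congr_fun this P

@[simp] lemma delta_one_one (P : MvPolynomial (Fin 2) K) : delta 1 1 P = P := by
  have : delta (K := K) 1 1 = AlgHom.id K _ := by
    apply algHom_ext
    intro i
    fin_cases i <;>
      simp only [Fin.isValue, Fin.zero_eta, Fin.mk_one, delta_X0, delta_X1, map_one, C_1,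
        one_mul, AlgHom.coe_id, id_eq]
  rw [this]; rfl

end SF3

namespace SF3
variable {K : Type*} [Field K]

lemma phi_as_sum (σ1 σ2 : ℕ) (F : MvPolynomial (Fin 2) K) :
    phi σ1 σ2 F = ∑ m ∈ F.support, monomial (mr (σ1 * m 0) (σ2 * m 1)) (coeff m F) := by
  conv_lhs => rw [F.as_sum]
  rw [map_sum]
  exact Finset.sum_congr rfl fun m _ => phi_monomial _ _ _ _

lemma mr_scaled_injective {σ1 σ2 : ℕ} (h1 : 0 < σ1) (h2 : 0 < σ2) {m m' : Fin 2 →₀ ℕ}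
    (h : mr (σ1 * m 0) (σ2 * m 1) = mr (σ1 * m' 0) (σ2 * m' 1)) : m = m' := by
  obtain ⟨ha, hb⟩ := mr_injective h
  have e0 : m 0 = m' 0 := Nat.eq_of_mul_eq_mul_left h1 ha
  have e1 : m 1 = m' 1 := Nat.eq_of_mul_eq_mul_left h2 hb
  rw [← mr_eq_self m, ← mr_eq_self m', e0, e1]

lemma coeff_phi {σ1 σ2 : ℕ} (h1 : 0 < σ1) (h2 : 0 < σ2) (F : MvPolynomial (Fin 2) K)
    (m : Fin 2 →₀ ℕ) :
    coeff (mr (σ1 * m 0) (σ2 * m 1)) (phi σ1 σ2 F) = coeff m F := by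
  rw [phi_as_sum, coeff_sum]
  have step : ∀ m' ∈ F.support,
      coeff (mr (σ1 * m 0) (σ2 * m 1)) (monomial (mr (σ1 * m' 0) (σ2 * m' 1)) (coeff m' F))
        = if m' = m then coeff m' F else 0 := by
    intro m' _
    rw [coeff_monomial]
    refine if_congr ⟨fun h => mr_scaled_injective h1 h2 h, fun h => by rw [h]⟩ rfl rfl
  rw [Finset.sum_congr rfl step, Finset.sum_ite_eq' F.support m (fun m' => coeff m' F)]
  by_cases hm : m ∈ F.support
  · rw [if_pos hm]
  · rw [if_neg hm]
    exact (notMem_support_iff.mp hm).symm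

lemma phi_injective (σ1 σ2 : ℕ) (h1 : 0 < σ1) (h2 : 0 < σ2) :
    Function.Injective (phi (K := K) σ1 σ2) := by
  intro P Q h
  apply MvPolynomial.ext
  intro m
  rw [← coeff_phi h1 h2 P m, ← coeff_phi h1 h2 Q m, h]

lemma support_phi {σ1 σ2 : ℕ} {F : MvPolynomial (Fin 2) K} {n : Fin 2 →₀ ℕ}
    (hn : n ∈ (phi σ1 σ2 F).support) :
    ∃ m ∈ F.support, n = mr (σ1 * m 0) (σ2 * m 1) := by
  rw [phi_as_sum] at hn
  classical
  obtain ⟨m, hm, hn'⟩ := Finset.mem_biUnion.mp (MvPolynomial.support_sum hn)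
  refine ⟨m, hm, ?_⟩
  have := support_monomial_subset hn'
  simpa using this

lemma X_dvd_iff_support {i : Fin 2} {P : MvPolynomial (Fin 2) K} :
    X i ∣ P ↔ ∀ m ∈ P.support, m i ≠ 0 := by
  classical
  constructor
  · rintro ⟨H, rfl⟩ m hm him
    rw [mem_support_iff, coeff_X_mul' m i H] at hm
    rw [if_neg (by simp [Finsupp.mem_support_iff, him])] at hm
    exact hm rfl
  · intro h
    conv_rhs => rw [P.as_sum]
    apply Finset.dvd_sum
    intro m hm
    have hmi := h m hm
    have hrepr : m = Finsupp.single i 1 + (m - Finsupp.single i 1) := by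
      ext j
      by_cases hj : j = i
      · subst hj
        simp only [Finsupp.add_apply, Finsupp.tsub_apply, Finsupp.single_eq_same]
        omega
      · simp [Finsupp.add_apply, Finsupp.tsub_apply, Finsupp.single_apply, Ne.symm hj, hj]
    rw [hrepr, monomial_single_add, pow_one]
    exact Dvd.intro _ rfl

lemma delta_as_sum (c d : K) (F : MvPolynomial (Fin 2) K) :
    delta c d F = ∑ m ∈ F.support, monomial m (coeff m F * c ^ m 0 * d ^ m 1) := by
  conv_lhs => rw [F.as_sum]
  rw [map_sum]
  exact Finset.sum_congr rfl fun m _ => delta_monomial _ _ _ _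

lemma coeff_delta (c d : K) (F : MvPolynomial (Fin 2) K) (m : Fin 2 →₀ ℕ) :
    coeff m (delta c d F) = coeff m F * c ^ m 0 * d ^ m 1 := by
  classical
  rw [delta_as_sum, coeff_sum]
  have step : ∀ m' ∈ F.support,
      coeff m (monomial m' (coeff m' F * c ^ m' 0 * d ^ m' 1))
        = if m' = m then coeff m' F * c ^ m' 0 * d ^ m' 1 else 0 := fun m' _ => coeff_monomial _ _ _
  rw [Finset.sum_congr rfl step, Finset.sum_ite_eq' F.support m]
  by_cases hm : m ∈ F.support
  · rw [if_pos hm]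
  · rw [if_neg hm, notMem_support_iff.mp hm, zero_mul, zero_mul]

lemma delta_phi {σ1 σ2 : ℕ} {c d : K} (hc : c ^ σ1 = 1) (hd : d ^ σ2 = 1)
    (F : MvPolynomial (Fin 2) K) :
    delta c d (phi σ1 σ2 F) = phi σ1 σ2 F := by
  have : (delta c d).comp (phi σ1 σ2) = phi (K := K) σ1 σ2 := by
    apply algHom_ext
    intro i
    fin_cases i <;>
    · simp only [Fin.isValue, AlgHom.comp_apply, Fin.zero_eta, Fin.mk_one, phi_X0, phi_X1,
        map_pow, delta_X0, delta_X1, mul_pow, ← C_pow, hc, hd, C_1, one_mul]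
  exact DFunLike.congr_fun this F

lemma exists_phi_eq {σ1 σ2 : ℕ} (h1 : 0 < σ1) (h2 : 0 < σ2) (P : MvPolynomial (Fin 2) K)
    (hdvd : ∀ m ∈ P.support, σ1 ∣ m 0 ∧ σ2 ∣ m 1) : ∃ Q, phi σ1 σ2 Q = P := by
  refine ⟨∑ m ∈ P.support, monomial (mr (m 0 / σ1) (m 1 / σ2)) (coeff m P), ?_⟩
  rw [map_sum]
  conv_rhs => rw [P.as_sum]
  refine Finset.sum_congr rfl fun m hm => ?_
  rw [phi_monomial]
  rw [mr_apply0, mr_apply1, Nat.mul_div_cancel' (hdvd m hm).1, Nat.mul_div_cancel' (hdvd m hm).2,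
    mr_eq_self]

lemma invariant_exists {σ1 σ2 : ℕ} (h1 : 0 < σ1) (h2 : 0 < σ2) {ζ ξ : K}
    (hζ : IsPrimitiveRoot ζ σ1) (hξ : IsPrimitiveRoot ξ σ2) (P : MvPolynomial (Fin 2) K)
    (hPζ : delta ζ 1 P = P) (hPξ : delta 1 ξ P = P) : ∃ Q, phi σ1 σ2 Q = P := by
  apply exists_phi_eq h1 h2
  intro m hm
  have h0 : coeff m P ≠ 0 := mem_support_iff.mp hm
  constructor
  · have hc := congrArg (coeff m) hPζ
    rw [coeff_delta, one_pow, mul_one] at hc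
    have : ζ ^ m 0 = 1 := by
      have := mul_left_cancel₀ h0 (by rw [mul_one]; exact hc : coeff m P * ζ ^ m 0 = coeff m P * 1)
      exact this
    exact (hζ.pow_eq_one_iff_dvd _).mp this
  · have hc := congrArg (coeff m) hPξ
    rw [coeff_delta, one_pow, mul_one] at hc
    have : ξ ^ m 1 = 1 := by
      have : coeff m P * ξ ^ m 1 = coeff m P * 1 := by rw [mul_one]; exact hc
      exact mul_left_cancel₀ h0 this
    exact (hξ.pow_eq_one_iff_dvd _).mp this

end SF3

namespace SF3
variable {K : Type*} [Field K]

lemma delta_prime {c d : K} (hc : c ≠ 0) (hd : d ≠ 0) {G : MvPolynomial (Fin 2) K}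
    (hG : Prime G) : Prime (delta c d G) := by
  let e : MvPolynomial (Fin 2) K ≃ₐ[K] MvPolynomial (Fin 2) K :=
    AlgEquiv.ofAlgHom (delta c d) (delta c⁻¹ d⁻¹)
      (AlgHom.ext fun P => by
        simp only [AlgHom.comp_apply, AlgHom.coe_id, id_eq, delta_delta,
          mul_inv_cancel₀ hc, mul_inv_cancel₀ hd, delta_one_one])
      (AlgHom.ext fun P => by
        simp only [AlgHom.comp_apply, AlgHom.coe_id, id_eq, delta_delta,
          inv_mul_cancel₀ hc, inv_mul_cancel₀ hd, delta_one_one])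
  have : Prime (e G) := (MulEquiv.prime_iff e.toRingEquiv.toMulEquiv).mpr hG
  exact this

lemma pderiv_as_sum (i : Fin 2) (q : MvPolynomial (Fin 2) K) :
    pderiv i q
      = ∑ m ∈ q.support, monomial (m - Finsupp.single i 1) (coeff m q * (m i : K)) := by
  conv_lhs => rw [q.as_sum, map_sum]
  exact Finset.sum_congr rfl fun m _ => pderiv_monomial

lemma degreeOf_pderiv_lt {i : Fin 2} {q : MvPolynomial (Fin 2) K} (h : pderiv i q ≠ 0) :
    degreeOf i (pderiv i q) < degreeOf i q := by
  classical
  have hsub : ∀ n ∈ (pderiv i q).support, n i + 1 ≤ degreeOf i q := by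
    intro n hn
    rw [pderiv_as_sum] at hn
    obtain ⟨m, hm, hn'⟩ := Finset.mem_biUnion.mp (MvPolynomial.support_sum hn)
    have hc : coeff m q * (m i : K) ≠ 0 := by
      intro hz
      rw [hz] at hn'
      simp at hn'
    have hmi : m i ≠ 0 := by
      intro hz
      rw [hz] at hc
      simp at hc
    have hn'' : n = m - Finsupp.single i 1 := by simpa using support_monomial_subset hn'
    have hni : n i = m i - 1 := by rw [hn'']; simp [Finsupp.tsub_apply]
    have hle : m i ≤ degreeOf i q := by
      rw [degreeOf_eq_sup]; exact Finset.le_sup (f := fun m : Fin 2 →₀ ℕ => m i) hm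
    omega
  obtain ⟨n0, hn0⟩ := support_nonempty.mpr h
  have hpos : 0 < degreeOf i q := lt_of_lt_of_le (Nat.succ_pos _) (hsub n0 hn0)
  rw [degreeOf_eq_sup]
  have hb : (⊥ : ℕ) < degreeOf i q := by simpa using hpos
  refine (Finset.sup_lt_iff (f := fun m : Fin 2 →₀ ℕ => m i)
    (s := (pderiv i q).support) (a := degreeOf i q) hb).mpr ?_
  intro n hn
  have := hsub n hn
  omega

lemma degreeOf0_le_of_dvd {q r : MvPolynomial (Fin 2) K} (h : q ∣ r) (hr : r ≠ 0) :
    degreeOf 0 q ≤ degreeOf 0 r := by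
  rw [← natDegree_finSuccEquiv, ← natDegree_finSuccEquiv]
  refine Polynomial.natDegree_le_of_dvd (map_dvd (finSuccEquiv K 1) h) ?_
  intro h0
  exact hr ((AlgEquiv.injective _) (by rw [h0, map_zero]))

lemma degreeOf_le_of_dvd {i : Fin 2} {q r : MvPolynomial (Fin 2) K} (h : q ∣ r) (hr : r ≠ 0) :
    degreeOf i q ≤ degreeOf i r := by
  have hswap : (Equiv.swap (0 : Fin 2) i) i = 0 := Equiv.swap_apply_right 0 i
  have e1 : degreeOf i q = degreeOf 0 (rename (Equiv.swap (0 : Fin 2) i) q) := by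
    have := degreeOf_rename_of_injective (p := q)
      (f := ⇑(Equiv.swap (0 : Fin 2) i)) (Equiv.injective _) i
    rw [hswap] at this
    exact this.symm
  have e2 : degreeOf i r = degreeOf 0 (rename (Equiv.swap (0 : Fin 2) i) r) := by
    have := degreeOf_rename_of_injective (p := r)
      (f := ⇑(Equiv.swap (0 : Fin 2) i)) (Equiv.injective _) i
    rw [hswap] at this
    exact this.symm
  rw [e1, e2]
  refine degreeOf0_le_of_dvd (map_dvd (rename (Equiv.swap (0 : Fin 2) i)) h) ?_
  intro h0
  exact hr ((rename_injective _ (Equiv.injective _)) (by rw [h0, map_zero]))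

lemma pderiv_eq_zero_of_self_dvd {i : Fin 2} {q : MvPolynomial (Fin 2) K}
    (h : q ∣ pderiv i q) : pderiv i q = 0 := by
  by_contra hne
  have h1 := degreeOf_pderiv_lt hne
  have h2 := degreeOf_le_of_dvd (i := i) h hne
  omega

lemma char_dvd_of_pderiv_eq_zero {i : Fin 2} {q : MvPolynomial (Fin 2) K}
    (h : pderiv i q = 0) {m : Fin 2 →₀ ℕ} (hm : m ∈ q.support) : ringChar K ∣ m i := by
  classical
  by_contra hdvd
  have hKi : (m i : K) ≠ 0 := by
    intro h0
    exact hdvd ((CharP.cast_eq_zero_iff K (ringChar K) _).mp h0)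
  have hmi : m i ≠ 0 := by
    intro h0
    exact hdvd (h0 ▸ dvd_zero _)
  have hcoeff : coeff (m - Finsupp.single i 1) (pderiv i q) = coeff m q * (m i : K) := by
    rw [pderiv_as_sum, coeff_sum]
    rw [Finset.sum_eq_single m]
    · rw [coeff_monomial, if_pos rfl]
    · intro b hb hbm
      rw [coeff_monomial]
      by_cases hbi : b i = 0
      · split_ifs <;> simp [hbi]
      · rw [if_neg]
        intro heq
        apply hbm
        ext j
        by_cases hj : j = i
        · subst hj
          have := congrArg (fun f => f j) heq
          simp only [Finsupp.tsub_apply, Finsupp.single_eq_same] at this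
          omega
        · have := congrArg (fun f => f j) heq
          simp only [Finsupp.tsub_apply, Finsupp.single_apply, Ne.symm hj, if_neg hj] at this
          simpa using this
    · intro hmem
      exact absurd hm hmem
  rw [h] at hcoeff
  simp only [coeff_zero] at hcoeff
  exact (mul_ne_zero (mem_support_iff.mp hm) hKi) hcoeff.symm

lemma eq_pow_char {p : ℕ} (hp : p.Prime) [CharP K p] [ExpChar K p] [PerfectRing K p]
    (q : MvPolynomial (Fin 2) K)
    (hdvd : ∀ m ∈ q.support, p ∣ m 0 ∧ p ∣ m 1) : ∃ r, r ^ p = q := by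
  haveI : Fact p.Prime := ⟨hp⟩
  haveI : ExpChar (MvPolynomial (Fin 2) K) p := ExpChar.prime hp
  refine ⟨∑ m ∈ q.support,
    monomial (mr (m 0 / p) (m 1 / p)) ((frobeniusEquiv K p).symm (coeff m q)), ?_⟩
  have hfr : ∀ x : MvPolynomial (Fin 2) K, x ^ p = frobenius _ p x := fun x =>
    (frobenius_def _ _).symm
  rw [hfr, map_sum]
  conv_rhs => rw [q.as_sum]
  refine Finset.sum_congr rfl fun m hm => ?_
  rw [frobenius_def, monomial_pow]
  have hexp : p • mr (m 0 / p) (m 1 / p) = m := by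
    ext j
    fin_cases j <;>
      simp [Finsupp.smul_apply, Nat.mul_div_cancel' (hdvd m hm).1,
        Nat.mul_div_cancel' (hdvd m hm).2]
  rw [hexp]
  congr 1
  have := (frobeniusEquiv K p).apply_symm_apply (coeff m q)
  rwa [frobeniusEquiv_def] at this

end SF3

namespace SF3
variable {K : Type*} [Field K]

lemma prime_X_mv (i : Fin 2) : Prime (X i : MvPolynomial (Fin 2) K) := by
  have h0 : Prime (X 0 : MvPolynomial (Fin 2) K) := by
    have : Prime (Polynomial.X : Polynomial (MvPolynomial (Fin 1) K)) := Polynomial.prime_X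
    have he : (finSuccEquiv K 1) (X 0 : MvPolynomial (Fin 2) K) = Polynomial.X :=
      finSuccEquiv_X_zero
    have := (MulEquiv.prime_iff (finSuccEquiv K 1).toRingEquiv.toMulEquiv
      (p := (X 0 : MvPolynomial (Fin 2) K))).mp ?_
    · exact this
    · show Prime ((finSuccEquiv K 1) (X 0 : MvPolynomial (Fin 2) K))
      rw [he]
      exact Polynomial.prime_X
  fin_cases i
  · exact h0
  · have he : (renameEquiv K (Equiv.swap (0 : Fin 2) 1)) (X 0 : MvPolynomial (Fin 2) K)
        = X 1 := by
      simp [renameEquiv_apply, rename_X]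
    have := (MulEquiv.prime_iff (renameEquiv K (Equiv.swap (0 : Fin 2) 1)).toRingEquiv.toMulEquiv
      (p := (X 0 : MvPolynomial (Fin 2) K))).mpr h0
    rw [show ((renameEquiv K (Equiv.swap (0 : Fin 2) 1)).toRingEquiv.toMulEquiv)
        (X 0 : MvPolynomial (Fin 2) K) = X 1 from he] at this
    exact this

lemma keyA [IsAlgClosed K] {q F : MvPolynomial (Fin 2) K} (hq : Prime q) (hsf : Squarefree F)
    (hd : q ∣ F) (hd0 : q ∣ pderiv 0 F) (hd1 : q ∣ pderiv 1 F) : False := by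
  obtain ⟨H, rfl⟩ := hd
  have hqH : ¬ q ∣ H := by
    intro hdH
    exact hq.not_unit (hsf q (mul_dvd_mul_left q hdH))
  have step : ∀ i : Fin 2, q ∣ pderiv i (q * H) → pderiv i q = 0 := by
    intro i hi
    rw [pderiv_mul] at hi
    have h2 : q ∣ q * pderiv i H := Dvd.intro _ rfl
    have h3 : q ∣ pderiv i q * H := (dvd_add_left h2).mp hi
    rcases hq.dvd_mul.mp h3 with h4 | h4
    · exact pderiv_eq_zero_of_self_dvd h4
    · exact absurd h4 hqH
  have hz0 := step 0 hd0
  have hz1 := step 1 hd1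
  have hdvdm : ∀ m ∈ q.support, ringChar K ∣ m 0 ∧ ringChar K ∣ m 1 := fun m hm =>
    ⟨char_dvd_of_pderiv_eq_zero hz0 hm, char_dvd_of_pderiv_eq_zero hz1 hm⟩
  haveI := ringChar.charP K
  rcases CharP.char_is_prime_or_zero K (ringChar K) with hp | hp
  · haveI : ExpChar K (ringChar K) := ExpChar.prime hp
    obtain ⟨r, hr⟩ := eq_pow_char hp q hdvdm
    have hru : ¬ IsUnit r := fun hu => hq.not_unit (hr ▸ hu.pow _)
    have hq2 : q = r * r ^ (ringChar K - 1) := by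
      rw [← hr, ← pow_succ']
      congr 1
      have := hp.two_le
      omega
    rcases hq.irreducible.isUnit_or_isUnit hq2 with h | h
    · exact hru h
    · refine hru ((isUnit_pow_iff ?_).mp h)
      have := hp.two_le
      omega
  · rw [hp] at hdvdm
    have hall : ∀ m ∈ q.support, ∀ j : Fin 2, m j = 0 := by
      intro m hm j
      fin_cases j
      · exact zero_dvd_iff.mp (hdvdm m hm).1
      · exact zero_dvd_iff.mp (hdvdm m hm).2
    have hC : q = C (coeff 0 q) := by
      apply MvPolynomial.ext
      intro n
      rw [coeff_C]
      by_cases hn : 0 = n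
      · rw [if_pos hn, ← hn]
      · rw [if_neg hn]
        apply notMem_support_iff.mp
        intro hmem
        exact hn (Finsupp.ext fun j => (hall n hmem j).symm)
    have hcne : coeff 0 q ≠ 0 := by
      intro h0
      rw [h0, map_zero] at hC
      exact hq.ne_zero hC
    exact hq.not_unit (hC ▸ (isUnit_iff_ne_zero.mpr hcne).map (MvPolynomial.C : K →+* MvPolynomial (Fin 2) K))

end SF3

namespace SF3
variable {K : Type*} [Field K]

lemma pderiv0_phi (σ1 σ2 : ℕ) (h1 : 0 < σ1) (F : MvPolynomial (Fin 2) K) :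
    pderiv 0 (phi σ1 σ2 F)
      = phi σ1 σ2 (pderiv 0 F) * (C (σ1 : K) * X 0 ^ (σ1 - 1)) := by
  classical
  rw [phi_as_sum, map_sum, pderiv_as_sum 0 F, map_sum, Finset.sum_mul]
  refine Finset.sum_congr rfl fun m hm => ?_
  rw [pderiv_monomial, phi_monomial, C_mul_X_pow_eq_monomial, monomial_mul]
  have e0 : ((m - Finsupp.single (0 : Fin 2) 1 : Fin 2 →₀ ℕ)) 0 = m 0 - 1 := by
    simp [Finsupp.tsub_apply]
  have e1 : ((m - Finsupp.single (0 : Fin 2) 1 : Fin 2 →₀ ℕ)) 1 = m 1 := by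
    simp [Finsupp.tsub_apply, Finsupp.single_apply]
  rw [e0, e1]
  rcases Nat.eq_zero_or_pos (m 0) with h0 | h0
  · simp [h0]
  · have hexp : mr (σ1 * m 0) (σ2 * m 1) - Finsupp.single 0 1
        = mr (σ1 * (m 0 - 1)) (σ2 * m 1) + Finsupp.single 0 (σ1 - 1) := by
      ext j
      fin_cases j
      · simp only [Fin.zero_eta, Finsupp.tsub_apply, Finsupp.add_apply, mr_apply0,
          Finsupp.single_eq_same]
        obtain ⟨k, hk⟩ : ∃ k, m 0 = k + 1 := ⟨m 0 - 1, by omega⟩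
        rw [hk, Nat.add_sub_cancel, Nat.mul_succ]
        omega
      · simp only [Fin.mk_one, Finsupp.tsub_apply, Finsupp.add_apply, mr_apply1,
          Finsupp.single_apply]
        norm_num
    rw [hexp]
    congr 1
    simp only [mr_apply0]
    push_cast
    ring

lemma pderiv1_phi (σ1 σ2 : ℕ) (h2 : 0 < σ2) (F : MvPolynomial (Fin 2) K) :
    pderiv 1 (phi σ1 σ2 F)
      = phi σ1 σ2 (pderiv 1 F) * (C (σ2 : K) * X 1 ^ (σ2 - 1)) := by
  classical
  rw [phi_as_sum, map_sum, pderiv_as_sum 1 F, map_sum, Finset.sum_mul]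
  refine Finset.sum_congr rfl fun m hm => ?_
  rw [pderiv_monomial, phi_monomial, C_mul_X_pow_eq_monomial, monomial_mul]
  have e0 : ((m - Finsupp.single (1 : Fin 2) 1 : Fin 2 →₀ ℕ)) 0 = m 0 := by
    simp [Finsupp.tsub_apply, Finsupp.single_apply]
  have e1 : ((m - Finsupp.single (1 : Fin 2) 1 : Fin 2 →₀ ℕ)) 1 = m 1 - 1 := by
    simp [Finsupp.tsub_apply]
  rw [e0, e1]
  rcases Nat.eq_zero_or_pos (m 1) with h0 | h0
  · simp [h0]
  · have hexp : mr (σ1 * m 0) (σ2 * m 1) - Finsupp.single 1 1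
        = mr (σ1 * m 0) (σ2 * (m 1 - 1)) + Finsupp.single 1 (σ2 - 1) := by
      ext j
      fin_cases j
      · simp only [Fin.zero_eta, Finsupp.tsub_apply, Finsupp.add_apply, mr_apply0,
          Finsupp.single_apply]
        norm_num
      · simp only [Fin.mk_one, Finsupp.tsub_apply, Finsupp.add_apply, mr_apply1,
          Finsupp.single_eq_same]
        obtain ⟨k, hk⟩ : ∃ k, m 1 = k + 1 := ⟨m 1 - 1, by omega⟩
        rw [hk, Nat.add_sub_cancel, Nat.mul_succ]
        omega
    rw [hexp]
    congr 1
    simp only [mr_apply1]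
    push_cast
    ring

lemma pow_val_add_one {n : ℕ} [NeZero n] {ζ : K} (hζ : ζ ^ n = 1) (i : ZMod n) :
    ζ ^ (i + 1 : ZMod n).val = ζ ^ (i.val + 1) := by
  conv_rhs => rw [pow_eq_pow_mod _ hζ]
  conv_lhs => rw [pow_eq_pow_mod _ hζ]
  congr 1
  rw [ZMod.val_add, ZMod.val_one_eq_one_mod]
  conv_rhs => rw [Nat.add_mod, Nat.mod_eq_of_lt (ZMod.val_lt i)]
  exact Nat.mod_mod_of_dvd _ dvd_rfl

end SF3


open SF3

/-- **Lemma.** Let `K` be an algebraically closed field of characteristic `p ≥ 0`, let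
`F ∈ K[X,Y]` be squarefree, divisible by neither `X` nor `Y`, and let `σ1, σ2` be positive
integers not divisible by `p`.  Then `F(X^σ1, Y^σ2)` is squarefree. -/
theorem stmt3 {K : Type*} [Field K] [IsAlgClosed K]
    (F : MvPolynomial (Fin 2) K) (hsf : Squarefree F)
    (hX : ¬ (MvPolynomial.X 0 ∣ F)) (hY : ¬ (MvPolynomial.X 1 ∣ F))
    (σ1 σ2 : ℕ) (h1 : 0 < σ1) (h2 : 0 < σ2)
    (hp1 : ¬ (ringChar K ∣ σ1)) (hp2 : ¬ (ringChar K ∣ σ2)) :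
    Squarefree
      (MvPolynomial.aeval ![MvPolynomial.X 0 ^ σ1, MvPolynomial.X 1 ^ σ2] F :
        MvPolynomial (Fin 2) K) := by
  classical
  have hσ1K : (σ1 : K) ≠ 0 := fun h => hp1 ((ringChar.spec K σ1).mp h)
  have hσ2K : (σ2 : K) ≠ 0 := fun h => hp2 ((ringChar.spec K σ2).mp h)
  haveI : NeZero (σ1 : K) := ⟨hσ1K⟩
  haveI : NeZero (σ2 : K) := ⟨hσ2K⟩
  haveI : NeZero σ1 := ⟨h1.ne'⟩
  haveI : NeZero σ2 := ⟨h2.ne'⟩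
  obtain ⟨ζ, hζ⟩ := HasEnoughRootsOfUnity.exists_primitiveRoot K σ1
  obtain ⟨ξ, hξ⟩ := HasEnoughRootsOfUnity.exists_primitiveRoot K σ2
  have hζ1 : ζ ^ σ1 = 1 := hζ.pow_eq_one
  have hξ1 : ξ ^ σ2 = 1 := hξ.pow_eq_one
  have hζ0 : ζ ≠ 0 := hζ.ne_zero h1.ne'
  have hξ0 : ξ ≠ 0 := hξ.ne_zero h2.ne'
  show Squarefree (phi σ1 σ2 F)
  have hF0 : F ≠ 0 := hsf.ne_zero
  have hφinj := phi_injective (K := K) σ1 σ2 h1 h2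
  have hΦ0 : phi σ1 σ2 F ≠ 0 := fun h => hF0 (hφinj (by rw [h, map_zero]))
  intro x hx
  by_contra hxu
  have hx0 : x ≠ 0 := by
    rintro rfl
    rw [zero_mul] at hx
    exact hΦ0 (zero_dvd_iff.mp hx)
  obtain ⟨G, hGirr, hGx⟩ := WfDvdMonoid.exists_irreducible_factor hxu hx0
  have hG : Prime G := UniqueFactorizationMonoid.irreducible_iff_prime.mp hGirr
  have hGG : G * G ∣ phi σ1 σ2 F := (mul_dvd_mul hGx hGx).trans hx
  have hGΦ : G ∣ phi σ1 σ2 F := (dvd_mul_right G G).trans hGG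
  have hX0Φ : ¬ X 0 ∣ phi σ1 σ2 F := by
    intro hdvd
    have hXF := hX
    rw [X_dvd_iff_support] at hXF
    push_neg at hXF
    obtain ⟨m, hm, hm0⟩ := hXF
    have hmem : mr (σ1 * m 0) (σ2 * m 1) ∈ (phi σ1 σ2 F).support := by
      rw [mem_support_iff, coeff_phi h1 h2]
      exact mem_support_iff.mp hm
    have := X_dvd_iff_support.mp hdvd _ hmem
    rw [mr_apply0, hm0, Nat.mul_zero] at this
    exact this rfl
  have hX1Φ : ¬ X 1 ∣ phi σ1 σ2 F := by
    intro hdvd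
    have hYF := hY
    rw [X_dvd_iff_support] at hYF
    push_neg at hYF
    obtain ⟨m, hm, hm1⟩ := hYF
    have hmem : mr (σ1 * m 0) (σ2 * m 1) ∈ (phi σ1 σ2 F).support := by
      rw [mem_support_iff, coeff_phi h1 h2]
      exact mem_support_iff.mp hm
    have := X_dvd_iff_support.mp hdvd _ hmem
    rw [mr_apply1, hm1, Nat.mul_zero] at this
    exact this rfl
  have hGX : ∀ i : Fin 2, (¬ X i ∣ phi σ1 σ2 F) → ¬ G ∣ X i := by
    intro i hnd hGXi
    exact hnd ((hGirr.dvd_symm (prime_X_mv (K := K) i).irreducible hGXi).trans hGΦ)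
  have hGd : ∀ i : Fin 2, G ∣ pderiv i (phi σ1 σ2 F) := by
    obtain ⟨T, hT⟩ := hGG
    intro i
    rw [hT, mul_assoc, pderiv_mul]
    exact dvd_add ((dvd_mul_right G T).mul_left _) (dvd_mul_right G _)
  have hGφ0 : G ∣ phi σ1 σ2 (pderiv 0 F) := by
    have hd := hGd 0
    rw [pderiv0_phi σ1 σ2 h1] at hd
    rcases hG.dvd_mul.mp hd with h | h
    · exact h
    · exfalso
      rcases hG.dvd_mul.mp h with h' | h'
      · exact hG.not_unit (isUnit_of_dvd_unit h'
          ((isUnit_iff_ne_zero.mpr hσ1K).map (C : K →+* MvPolynomial (Fin 2) K)))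
      · exact (hGX 0 hX0Φ) (hG.dvd_of_dvd_pow h')
  have hGφ1 : G ∣ phi σ1 σ2 (pderiv 1 F) := by
    have hd := hGd 1
    rw [pderiv1_phi σ1 σ2 h2] at hd
    rcases hG.dvd_mul.mp hd with h | h
    · exact h
    · exfalso
      rcases hG.dvd_mul.mp h with h' | h'
      · exact hG.not_unit (isUnit_of_dvd_unit h'
          ((isUnit_iff_ne_zero.mpr hσ2K).map (C : K →+* MvPolynomial (Fin 2) K)))
      · exact (hGX 1 hX1Φ) (hG.dvd_of_dvd_pow h')
  set n := Fintype.card (ZMod σ1 × ZMod σ2) with hn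
  set N : MvPolynomial (Fin 2) K :=
    ∏ ij : ZMod σ1 × ZMod σ2, delta (ζ ^ ij.1.val) (ξ ^ ij.2.val) G with hNdef
  have hconj_dvd : ∀ B : MvPolynomial (Fin 2) K, G ∣ phi σ1 σ2 B →
      N ∣ phi σ1 σ2 B ^ n := by
    intro B hB
    rw [hn, ← Finset.card_univ, ← Finset.prod_const, hNdef]
    refine Finset.prod_dvd_prod_of_dvd _ _ ?_
    intro ij _
    have hinv := delta_phi (σ1 := σ1) (σ2 := σ2) (F := B)
      (c := ζ ^ ij.1.val) (d := ξ ^ ij.2.val)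
      (by rw [← pow_mul, mul_comm, pow_mul, hζ1, one_pow])
      (by rw [← pow_mul, mul_comm, pow_mul, hξ1, one_pow])
    calc delta (ζ ^ ij.1.val) (ξ ^ ij.2.val) G
        ∣ delta (ζ ^ ij.1.val) (ξ ^ ij.2.val) (phi σ1 σ2 B) := map_dvd _ hB
      _ = phi σ1 σ2 B := hinv
  have hNinv_ζ : delta ζ 1 N = N := by
    rw [hNdef, map_prod]
    have key : ∀ ij : ZMod σ1 × ZMod σ2,
        delta ζ 1 (delta (ζ ^ ij.1.val) (ξ ^ ij.2.val) G)
          = delta (ζ ^ ((ij.1 + 1 : ZMod σ1)).val) (ξ ^ ij.2.val) G := by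
      intro ij
      rw [delta_delta, one_mul, pow_val_add_one hζ1, pow_succ']
    rw [Finset.prod_congr rfl fun ij _ => key ij]
    exact Fintype.prod_equiv (Equiv.prodCongr (Equiv.addRight (1 : ZMod σ1)) (Equiv.refl _))
      _ _ (fun ij => rfl)
  have hNinv_ξ : delta 1 ξ N = N := by
    rw [hNdef, map_prod]
    have key : ∀ ij : ZMod σ1 × ZMod σ2,
        delta 1 ξ (delta (ζ ^ ij.1.val) (ξ ^ ij.2.val) G)
          = delta (ζ ^ ij.1.val) (ξ ^ ((ij.2 + 1 : ZMod σ2)).val) G := by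
      intro ij
      rw [delta_delta, one_mul, pow_val_add_one hξ1, pow_succ']
    rw [Finset.prod_congr rfl fun ij _ => key ij]
    exact Fintype.prod_equiv (Equiv.prodCongr (Equiv.refl _) (Equiv.addRight (1 : ZMod σ2)))
      _ _ (fun ij => rfl)
  have hN0 : N ≠ 0 := by
    rw [hNdef]
    refine Finset.prod_ne_zero_iff.mpr fun ij _ => ?_
    exact (delta_prime (pow_ne_zero _ hζ0) (pow_ne_zero _ hξ0) hG).ne_zero
  have hGN : G ∣ N := by
    rw [hNdef]
    have := Finset.dvd_prod_of_mem
      (fun ij : ZMod σ1 × ZMod σ2 => delta (ζ ^ ij.1.val) (ξ ^ ij.2.val) G)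
      (Finset.mem_univ ((0 : ZMod σ1), (0 : ZMod σ2)))
    simpa [ZMod.val_zero, pow_zero, delta_one_one] using this
  have hNu : ¬ IsUnit N := fun hu => hG.not_unit (isUnit_of_dvd_unit hGN hu)
  obtain ⟨M, hM⟩ := invariant_exists h1 h2 hζ hξ N hNinv_ζ hNinv_ξ
  have transfer : ∀ B : MvPolynomial (Fin 2) K, N ∣ phi σ1 σ2 B → M ∣ B := by
    intro B hdvd
    obtain ⟨Q, hQ⟩ := hdvd
    have hQζ : delta ζ 1 Q = Q := by
      have h0 := congrArg (delta ζ 1) hQ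
      rw [delta_phi hζ1 (one_pow σ2), map_mul, hNinv_ζ] at h0
      exact (mul_left_cancel₀ hN0 (hQ.symm.trans h0)).symm
    have hQξ : delta 1 ξ Q = Q := by
      have h0 := congrArg (delta 1 ξ) hQ
      rw [delta_phi (one_pow σ1) hξ1, map_mul, hNinv_ξ] at h0
      exact (mul_left_cancel₀ hN0 (hQ.symm.trans h0)).symm
    obtain ⟨Rq, hRq⟩ := invariant_exists h1 h2 hζ hξ Q hQζ hQξ
    refine ⟨Rq, hφinj ?_⟩
    rw [map_mul, hM, hRq, ← hQ]
  have hMF : M ∣ F ^ n := transfer _ (by rw [map_pow]; exact hconj_dvd F hGΦ)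
  have hMF0 : M ∣ (pderiv 0 F) ^ n := transfer _ (by rw [map_pow]; exact hconj_dvd _ hGφ0)
  have hMF1 : M ∣ (pderiv 1 F) ^ n := transfer _ (by rw [map_pow]; exact hconj_dvd _ hGφ1)
  have hMu : ¬ IsUnit M := fun hu => hNu (hM ▸ hu.map (phi σ1 σ2))
  have hn0 : n ≠ 0 := by rw [hn]; exact Fintype.card_ne_zero
  have hM0 : M ≠ 0 := by
    rintro rfl
    rw [zero_dvd_iff] at hMF
    exact hF0 (pow_eq_zero_iff hn0 |>.mp hMF)
  obtain ⟨qp, hqirr, hqM⟩ := WfDvdMonoid.exists_irreducible_factor hMu hM0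
  have hqp : Prime qp := UniqueFactorizationMonoid.irreducible_iff_prime.mp hqirr
  exact keyA hqp hsf (hqp.dvd_of_dvd_pow (hqM.trans hMF))
    (hqp.dvd_of_dvd_pow (hqM.trans hMF0)) (hqp.dvd_of_dvd_pow (hqM.trans hMF1))
end

section
/- Let a, b ∈ ℕ with gcd(a,b) = 1 (so (a,b) ≠ (0,0)), and let P ∈ K[s] be a polynomial with P(0) ≠ 0 and k := deg(P) ≥ 1. Then the polynomial P(X^a·Y^b) ∈ K[X,Y] is a nonzero scalar multiple of a power of an irreducible polynomial of K[X,Y] if and only if P = ν·(s−ξ)^k for some ν, ξ ∈ K^×; in that case P(X^a·Y^b) = ν·(X^a·Y^b − ξ)^k with X^a·Y^b − ξ irreducible. -/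
open Polynomial

noncomputable section

namespace Stmt15Aux

open MvPolynomial

variable {K : Type*} [Field K]

local notation "R" => MvPolynomial (Fin 2) K
local notation "L" => AddMonoidAlgebra K (ℤ × ℤ)

def ι : MvPolynomial (Fin 2) K →ₐ[K] AddMonoidAlgebra K (ℤ × ℤ) :=
  MvPolynomial.aeval fun i =>
    AddMonoidAlgebra.single (if i = 0 then ((1:ℤ),(0:ℤ)) else ((0:ℤ),(1:ℤ))) 1

lemma ι_X0 : ι (X 0 : R) = AddMonoidAlgebra.single ((1:ℤ),(0:ℤ)) 1 := by
  simp [ι]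

lemma ι_X1 : ι (X 1 : R) = AddMonoidAlgebra.single ((0:ℤ),(1:ℤ)) 1 := by
  simp [ι]

lemma ι_C (c : K) : ι (C c : R) = AddMonoidAlgebra.single (0 : ℤ × ℤ) c := by
  simp [ι, MvPolynomial.algHom_C]

lemma ι_monomial (d : Fin 2 →₀ ℕ) (c : K) :
    ι (monomial d c : R) = AddMonoidAlgebra.single (((d 0 : ℤ)), ((d 1 : ℤ))) c := by
  have h : (monomial d c : R) = MvPolynomial.C c * X 0 ^ (d 0) * X 1 ^ (d 1) := by
    rw [MvPolynomial.monomial_eq]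
    rw [Finsupp.prod_fintype _ _ (by intro i; simp)]
    rw [Fin.prod_univ_two, mul_assoc]
  rw [h]
  simp only [map_mul, map_pow, ι_X0, ι_X1, ι_C, AddMonoidAlgebra.single_pow,
    AddMonoidAlgebra.single_mul_single, one_pow, one_mul, mul_one]
  congr 1
  · simp [Prod.ext_iff]

def π (d : Fin 2 →₀ ℕ) : ℤ × ℤ := ((d 0 : ℤ), (d 1 : ℤ))

lemma π_inj : Function.Injective π := by
  intro d e h
  simp only [π, Prod.ext_iff, Nat.cast_inj] at h
  ext i
  fin_cases i
  · exact h.1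
  · exact h.2

lemma ι_eq_sum (p : R) :
    ι p = ∑ d ∈ p.support, AddMonoidAlgebra.single (π d) (coeff d p) := by
  conv_lhs => rw [p.as_sum]
  rw [map_sum]
  exact Finset.sum_congr rfl fun d _ => ι_monomial d _

lemma ι_apply_coeff (p : R) (d : Fin 2 →₀ ℕ) : (ι p).coeff (π d) = coeff d p := by
  rw [ι_eq_sum, AddMonoidAlgebra.coeff_sum, Finsupp.finset_sum_apply]
  by_cases hd : d ∈ p.support
  · rw [Finset.sum_eq_single d]
    · simp
    · intro e _ hne
      exact Finsupp.single_eq_of_ne' fun h => hne (π_inj h)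
    · intro h; exact absurd hd h
  · rw [Finset.sum_eq_zero, eq_comm]
    · exact MvPolynomial.notMem_support_iff.mp hd
    · intro e he
      refine Finsupp.single_eq_of_ne' fun h => hd ?_
      rwa [← π_inj h]

lemma ι_inj : Function.Injective (ι (K := K)) := by
  intro p q h
  ext d
  have := congrArg (fun z => z.coeff (π d)) h
  simpa [ι_apply_coeff] using this

lemma single_unit (w : ℤ × ℤ) : IsUnit (AddMonoidAlgebra.single w (1:K)) := by
  refine isUnit_iff_exists_inv.mpr ⟨AddMonoidAlgebra.single (-w) 1, ?_⟩
  rw [AddMonoidAlgebra.single_mul_single, add_neg_cancel, one_mul,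
    ← AddMonoidAlgebra.one_def]

/-- every element of L can be shifted by a monomial into the image of ι -/
lemma shift (z : L) : ∃ (m n : ℕ) (r : R),
    AddMonoidAlgebra.single (((m:ℤ)), ((n:ℤ))) 1 * z = ι r := by
  classical
  set m : ℕ := z.coeff.support.sup fun w => (-w.1).toNat with hmdef
  set n : ℕ := z.coeff.support.sup fun w => (-w.2).toNat with hndef
  have hm : ∀ w ∈ z.coeff.support, (0:ℤ) ≤ (m:ℤ) + w.1 := by
    intro w hw
    have : (-w.1).toNat ≤ m := Finset.le_sup (f := fun w => (-w.1).toNat) hw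
    omega
  have hn : ∀ w ∈ z.coeff.support, (0:ℤ) ≤ (n:ℤ) + w.2 := by
    intro w hw
    have : (-w.2).toNat ≤ n := Finset.le_sup (f := fun w => (-w.2).toNat) hw
    omega
  refine ⟨m, n, ∑ w ∈ z.coeff.support.attach, monomial
      (Finsupp.single 0 (((m:ℤ) + w.1.1).toNat) + Finsupp.single 1 (((n:ℤ) + w.1.2).toNat))
      (z.coeff w.1), ?_⟩
  rw [map_sum]
  conv_lhs => rw [← AddMonoidAlgebra.sum_coeff_single z, Finsupp.sum]
  rw [Finset.mul_sum, ← Finset.sum_attach z.coeff.support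
    (fun w => AddMonoidAlgebra.single ((m:ℤ),(n:ℤ)) 1 * AddMonoidAlgebra.single w (z.coeff w))]
  refine Finset.sum_congr rfl fun w _ => ?_
  rw [AddMonoidAlgebra.single_mul_single, one_mul, ι_monomial]
  congr 1
  have h1 := hm w.1 w.2
  have h2 := hn w.1 w.2
  simp only [Finsupp.add_apply, Finsupp.single_apply]
  norm_num
  rw [Prod.ext_iff]
  constructor <;> simp <;> omega

lemma prime_X0_sub_C (ξ : K) : Prime (X 0 - MvPolynomial.C ξ : R) := by
  rw [← MulEquiv.prime_iff (finSuccEquiv K 1)]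
  show Prime ((finSuccEquiv K 1) (X 0 - MvPolynomial.C ξ : R))
  have hC : (finSuccEquiv K 1) (MvPolynomial.C ξ : R) = Polynomial.C (MvPolynomial.C ξ) := by
    simp [MvPolynomial.finSuccEquiv_apply]
  rw [map_sub, finSuccEquiv_X_zero, hC]
  exact Polynomial.prime_X_sub_C _

lemma prime_X0 : Prime (X 0 : R) := by
  simpa using prime_X0_sub_C (0 : K)

lemma prime_X1 : Prime (X 1 : R) := by
  rw [← MulEquiv.prime_iff (MvPolynomial.renameEquiv K (Equiv.swap (0:Fin 2) 1))]
  show Prime ((MvPolynomial.renameEquiv K (Equiv.swap (0:Fin 2) 1)) (X 1 : R))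
  have : (MvPolynomial.renameEquiv K (Equiv.swap (0:Fin 2) 1)) (X 1 : R) = X 0 := by
    simp [Equiv.swap_apply_right]
  rw [this]; exact prime_X0

lemma ι_monpow (m n : ℕ) :
    ι (X 0 ^ m * X 1 ^ n : R) = AddMonoidAlgebra.single (((m:ℤ)), ((n:ℤ))) 1 := by
  simp only [map_mul, map_pow, ι_X0, ι_X1, AddMonoidAlgebra.single_pow,
    AddMonoidAlgebra.single_mul_single, one_pow, one_mul]
  congr 1
  simp [Prod.ext_iff]

lemma not_dvd_monpow {q : R} (hq : Prime q) (h0 : ¬ (X 0 : R) ∣ q) (h1 : ¬ (X 1 : R) ∣ q)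
    (m n : ℕ) : ¬ q ∣ (X 0 ^ m * X 1 ^ n : R) := by
  intro hdvd
  have key : ∀ i : Fin 2, ¬ (X i : R) ∣ q → ∀ l : ℕ, q ∣ (X i : R) ^ l → False := by
    intro i hi l hl
    have hqX : q ∣ (X i : R) := hq.dvd_of_dvd_pow hl
    obtain ⟨t, ht⟩ := hqX
    have hXi : Prime (X i : R) := by fin_cases i <;> [exact prime_X0; exact prime_X1]
    rcases hXi.irreducible.isUnit_or_isUnit ht with h | h
    · exact hq.not_unit h
    · obtain ⟨tu, rfl⟩ := h
      refine hi ⟨(↑tu⁻¹ : R), ?_⟩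
      rw [ht, mul_assoc, ← Units.val_mul, mul_inv_cancel, Units.val_one, mul_one]
  rcases hq.2.2 _ _ hdvd with h | h
  · exact key 0 h0 m h
  · exact key 1 h1 n h

lemma prime_ι {q : R} (hq : Prime q) (h0 : ¬ (X 0 : R) ∣ q) (h1 : ¬ (X 1 : R) ∣ q) :
    Prime (ι q) := by
  refine ⟨?_, ?_, ?_⟩
  · intro h
    exact hq.ne_zero (ι_inj (by simpa using h))
  · rintro hu
    obtain ⟨u, hu1⟩ := isUnit_iff_exists_inv.mp hu
    obtain ⟨m1, m2, u', hu'⟩ := shift u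
    have : ι (q * u') = ι ((X 0 : R) ^ m1 * X 1 ^ m2) := by
      rw [map_mul, ← hu', ι_monpow]
      calc ι q * (AddMonoidAlgebra.single ((m1:ℤ), (m2:ℤ)) 1 * u)
          = AddMonoidAlgebra.single ((m1:ℤ), (m2:ℤ)) 1 * (ι q * u) := by ring
        _ = _ := by rw [hu1, mul_one]
    have := ι_inj this
    exact not_dvd_monpow hq h0 h1 m1 m2 ⟨u', this.symm⟩
  · intro x y hdvd
    obtain ⟨z, hz⟩ := hdvd
    obtain ⟨mx1, mx2, x', hx⟩ := shift x
    obtain ⟨my1, my2, y', hy⟩ := shift y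
    obtain ⟨mz1, mz2, z', hzs⟩ := shift z
    have keyR : x' * y' * (X 0 ^ mz1 * X 1 ^ mz2)
        = q * z' * ((X 0 ^ mx1 * X 1 ^ mx2) * (X 0 ^ my1 * X 1 ^ my2)) := by
      have lhs : ι (x' * y' * (X 0 ^ mz1 * X 1 ^ mz2) : R)
          = ι x' * ι y' * AddMonoidAlgebra.single ((mz1:ℤ),(mz2:ℤ)) 1 := by
        rw [map_mul, map_mul, ι_monpow]
      have rhs : ι (q * z' * ((X 0 ^ mx1 * X 1 ^ mx2) * (X 0 ^ my1 * X 1 ^ my2)) : R)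
          = ι q * ι z' * (AddMonoidAlgebra.single ((mx1:ℤ),(mx2:ℤ)) 1
            * AddMonoidAlgebra.single ((my1:ℤ),(my2:ℤ)) 1) := by
        rw [map_mul, map_mul, map_mul, ι_monpow, ι_monpow]
      apply ι_inj
      rw [lhs, rhs, ← hx, ← hy, ← hzs]
      linear_combination (AddMonoidAlgebra.single ((mx1:ℤ),(mx2:ℤ)) (1:K)
        * AddMonoidAlgebra.single ((my1:ℤ),(my2:ℤ)) 1
        * AddMonoidAlgebra.single ((mz1:ℤ),(mz2:ℤ)) 1) * hz
    have hqd : q ∣ x' * y' * (X 0 ^ mz1 * X 1 ^ mz2) :=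
      ⟨z' * ((X 0 ^ mx1 * X 1 ^ mx2) * (X 0 ^ my1 * X 1 ^ my2)), by rw [keyR]; ring⟩
    have : q ∣ x' ∨ q ∣ y' := by
      rcases hq.2.2 _ _ hqd with h | h
      · exact hq.2.2 _ _ h
      · exact absurd h (not_dvd_monpow hq h0 h1 _ _)
    rcases this with h | h
    · left
      obtain ⟨w, hw⟩ := h
      have hui := single_unit (K := K) (-((mx1:ℤ),(mx2:ℤ)))
      refine ⟨AddMonoidAlgebra.single (-((mx1:ℤ),(mx2:ℤ))) 1 * ι w, ?_⟩
      have : x = AddMonoidAlgebra.single (-((mx1:ℤ),(mx2:ℤ))) 1 * ι x' := by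
        rw [← hx, ← mul_assoc, AddMonoidAlgebra.single_mul_single, neg_add_cancel,
          one_mul, ← AddMonoidAlgebra.one_def, one_mul]
      rw [this, hw, map_mul]
      ring
    · right
      obtain ⟨w, hw⟩ := h
      refine ⟨AddMonoidAlgebra.single (-((my1:ℤ),(my2:ℤ))) 1 * ι w, ?_⟩
      have : y = AddMonoidAlgebra.single (-((my1:ℤ),(my2:ℤ))) 1 * ι y' := by
        rw [← hy, ← mul_assoc, AddMonoidAlgebra.single_mul_single, neg_add_cancel,
          one_mul, ← AddMonoidAlgebra.one_def, one_mul]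
      rw [this, hw, map_mul]
      ring

lemma not_dvd_eval {p q : R} (g : Fin 2 → K) (hp : MvPolynomial.eval g p = 0)
    (hq : MvPolynomial.eval g q ≠ 0) : ¬ p ∣ q := by
  intro h
  obtain ⟨t, rfl⟩ := h
  simp [hp] at hq

def bez (a b : ℕ) (u v : ℤ) (h : (a:ℤ) * u + (b:ℤ) * v = 1) : (ℤ × ℤ) ≃+ (ℤ × ℤ) where
  toFun p := ((a:ℤ) * p.1 - v * p.2, (b:ℤ) * p.1 + u * p.2)
  invFun p := (u * p.1 + v * p.2, -(b:ℤ) * p.1 + (a:ℤ) * p.2)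
  left_inv p := by
    ext
    · simp; linear_combination p.1 * h
    · simp; linear_combination p.2 * h
  right_inv p := by
    ext
    · simp; linear_combination p.1 * h
    · simp; linear_combination p.2 * h
  map_add' p q := by ext <;> simp <;> ring

lemma binom_prime (a b : ℕ) (hab : Nat.gcd a b = 1) {ξ : K} (hξ : ξ ≠ 0) :
    Prime (X 0 ^ a * X 1 ^ b - MvPolynomial.C ξ : R) := by
  set f : R := X 0 ^ a * X 1 ^ b - MvPolynomial.C ξ with hf
  have hbez : (a : ℤ) * Nat.gcdA a b + (b : ℤ) * Nat.gcdB a b = 1 := by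
    have := Nat.gcd_eq_gcd_ab a b
    rw [hab] at this
    push_cast at this ⊢
    linarith
  have hab' : a ≠ 0 ∨ b ≠ 0 := by
    by_contra h
    push_neg at h
    rw [h.1, h.2] at hab
    simp at hab
  -- the zero evaluation of f is -ξ
  have heval : MvPolynomial.eval (fun _ => (0:K)) f = -ξ := by
    rw [hf]
    have : (0:K) ^ a * (0:K) ^ b = 0 := by
      rcases hab' with h | h
      · rw [zero_pow h, zero_mul]
      · rw [zero_pow h, mul_zero]
    simp [this]
  have hevalne : MvPolynomial.eval (fun _ => (0:K)) f ≠ 0 := by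
    rw [heval]; exact neg_ne_zero.mpr hξ
  have h0f : ¬ (X 0 : R) ∣ f := not_dvd_eval (fun _ => 0) (by simp) hevalne
  have h1f : ¬ (X 1 : R) ∣ f := not_dvd_eval (fun _ => 0) (by simp) hevalne
  -- g = X 0 - C ξ and its image under ι is prime
  set g : R := X 0 - MvPolynomial.C ξ with hg
  have hgeval : MvPolynomial.eval (fun _ => (0:K)) g ≠ 0 := by
    rw [hg]; simpa using hξ
  have hιg : Prime (ι g) := by
    refine prime_ι (prime_X0_sub_C ξ) ?_ ?_
    · exact not_dvd_eval (fun _ => 0) (by simp) hgeval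
    · exact not_dvd_eval (fun _ => 0) (by simp) hgeval
  -- the automorphism σ of L
  set σ : AddMonoidAlgebra K (ℤ × ℤ) ≃ₐ[K] AddMonoidAlgebra K (ℤ × ℤ) :=
    AddMonoidAlgebra.domCongr K K (bez a b (Nat.gcdA a b) (Nat.gcdB a b) hbez) with hσ
  have hσg : σ (ι g) = ι f := by
    rw [hg, hf, map_sub, map_sub, ι_X0, ι_C, map_sub, ι_monpow, ι_C,
      hσ, AddMonoidAlgebra.domCongr_single, AddMonoidAlgebra.domCongr_single]
    congr 2
    · show ((a:ℤ) * 1 - _ * 0, (b:ℤ) * 1 + _ * 0) = ((a:ℤ), (b:ℤ))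
      simp
    · show ((a:ℤ) * 0 - _ * 0, (b:ℤ) * 0 + _ * 0) = (0 : ℤ × ℤ)
      simp
  have hιf : Prime (ι f) := by
    rw [← hσg]
    exact ((MulEquiv.prime_iff σ).mpr hιg)
  -- descend primality to R
  have hX0 : (X 0 : R) ≠ 0 := MvPolynomial.X_ne_zero 0
  have hX1 : (X 1 : R) ≠ 0 := MvPolynomial.X_ne_zero 1
  refine ⟨?_, ?_, ?_⟩
  · intro h
    rw [h] at hιf
    exact hιf.ne_zero (map_zero ι)
  · intro h
    exact hιf.not_unit (h.map ι)
  · intro x y hxy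
    have : ι f ∣ ι x * ι y := by
      rw [← map_mul]
      exact map_dvd ι hxy
    have hdescend : ∀ w : R, ι f ∣ ι w → f ∣ w := by
      intro w hw
      obtain ⟨z, hz⟩ := hw
      obtain ⟨m1, m2, z', hzs⟩ := shift z
      have : ι (X 0 ^ m1 * X 1 ^ m2 * w : R) = ι (f * z') := by
        rw [map_mul ι (X 0 ^ m1 * X 1 ^ m2) w, ι_monpow, map_mul, hz, ← hzs]
        ring
      have hR : X 0 ^ m1 * X 1 ^ m2 * w = f * z' := ι_inj this
      have h1dvd : (X 0 : R) ^ m1 ∣ z' := by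
        refine (prime_X0).pow_dvd_of_dvd_mul_left m1 h0f ?_
        exact ⟨X 1 ^ m2 * w, by rw [← hR]; ring⟩
      obtain ⟨w1, hw1⟩ := h1dvd
      have hR2 : X 1 ^ m2 * w = f * w1 := by
        have := hR
        rw [hw1] at this
        have hc : (X 0 : R) ^ m1 * (X 1 ^ m2 * w) = X 0 ^ m1 * (f * w1) := by
          linear_combination this
        exact mul_left_cancel₀ (pow_ne_zero m1 hX0) hc
      have h2dvd : (X 1 : R) ^ m2 ∣ w1 := by
        refine (prime_X1).pow_dvd_of_dvd_mul_left m2 h1f ?_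
        exact ⟨w, hR2.symm⟩
      obtain ⟨w2, hw2⟩ := h2dvd
      refine ⟨w2, ?_⟩
      have hc : (X 1 : R) ^ m2 * w = X 1 ^ m2 * (f * w2) := by
        rw [hR2, hw2]
        ring
      exact mul_left_cancel₀ (pow_ne_zero m2 hX1) hc
    rcases hιf.2.2 _ _ this with h | h
    · exact Or.inl (hdescend x h)
    · exact Or.inr (hdescend y h)

lemma aeval_form (a b : ℕ) (ν ξ : K) (k : ℕ) (P : Polynomial K)
    (hP : P = Polynomial.C ν * (Polynomial.X - Polynomial.C ξ) ^ k) :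
    Polynomial.aeval (X 0 ^ a * X 1 ^ b : R) P
      = MvPolynomial.C ν * (X 0 ^ a * X 1 ^ b - MvPolynomial.C ξ) ^ k := by
  simp only [hP, map_mul, map_pow, map_sub, Polynomial.aeval_X, Polynomial.aeval_C,
    MvPolynomial.algebraMap_eq]

end Stmt15Aux

open Stmt15Aux MvPolynomial in
/-- **Lemma.** Let `K` be an algebraically closed field, `a, b ∈ ℕ` coprime, and
`P ∈ K[s]` with `P(0) ≠ 0` and `k = deg P ≥ 1`.  Then `P(X^a·Y^b) ∈ K[X,Y]` is a nonzero
scalar multiple of a power of an irreducible polynomial if and only if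
`P = ν·(s−ξ)^k` for some `ν, ξ ∈ K^×`; and in that case
`P(X^a·Y^b) = ν·(X^a·Y^b − ξ)^k` with `X^a·Y^b − ξ` irreducible. -/
theorem stmt15 {K : Type*} [Field K] [IsAlgClosed K]
    (a b : ℕ) (hab : Nat.gcd a b = 1) (P : Polynomial K)
    (hP0 : P.eval 0 ≠ 0) (hk : 1 ≤ P.natDegree) :
    ((∃ (c : K) (G : MvPolynomial (Fin 2) K) (n : ℕ), c ≠ 0 ∧ Irreducible G ∧
        Polynomial.aeval (MvPolynomial.X 0 ^ a * MvPolynomial.X 1 ^ b :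
            MvPolynomial (Fin 2) K) P = MvPolynomial.C c * G ^ n) ↔
      ∃ ν ξ : K, ν ≠ 0 ∧ ξ ≠ 0 ∧
        P = Polynomial.C ν * (Polynomial.X - Polynomial.C ξ) ^ P.natDegree) ∧
    ∀ ν ξ : K, ν ≠ 0 → ξ ≠ 0 →
      P = Polynomial.C ν * (Polynomial.X - Polynomial.C ξ) ^ P.natDegree →
      Polynomial.aeval (MvPolynomial.X 0 ^ a * MvPolynomial.X 1 ^ b :
            MvPolynomial (Fin 2) K) P =
          MvPolynomial.C ν *
            (MvPolynomial.X 0 ^ a * MvPolynomial.X 1 ^ b - MvPolynomial.C ξ) ^ P.natDegree ∧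
        Irreducible
          (MvPolynomial.X 0 ^ a * MvPolynomial.X 1 ^ b - MvPolynomial.C ξ :
            MvPolynomial (Fin 2) K) := by
  have hPne : P ≠ 0 := fun h => hP0 (by simp [h])
  constructor
  · constructor
    · rintro ⟨c, G, n, hc, hG, heq⟩
      -- P splits over K
      have hsplits : P.Splits := IsAlgClosed.splits P
      have hfact := hsplits.eq_prod_roots
      have hcard : P.roots.card = P.natDegree :=
        (Polynomial.splits_iff_card_roots).mp hsplits
      have hroot_ne : ∀ x ∈ P.roots, x ≠ 0 := by
        intro x hx h0
        have := Polynomial.isRoot_of_mem_roots hx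
        rw [h0] at this
        exact hP0 this
      have hCc : IsUnit (MvPolynomial.C c : MvPolynomial (Fin 2) K) :=
        (isUnit_iff_ne_zero.mpr hc).map MvPolynomial.C
      have assoc : ∀ x ∈ P.roots,
          Associated (X 0 ^ a * X 1 ^ b - MvPolynomial.C x : MvPolynomial (Fin 2) K) G := by
        intro x hx
        have hprime := binom_prime a b hab (hroot_ne x hx)
        have hdvdP : (Polynomial.X - Polynomial.C x) ∣ P :=
          Polynomial.dvd_iff_isRoot.mpr (Polynomial.isRoot_of_mem_roots hx)
        have hdvd : (X 0 ^ a * X 1 ^ b - MvPolynomial.C x : MvPolynomial (Fin 2) K)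
            ∣ Polynomial.aeval (X 0 ^ a * X 1 ^ b : MvPolynomial (Fin 2) K) P := by
          have := map_dvd (Polynomial.aeval (X 0 ^ a * X 1 ^ b : MvPolynomial (Fin 2) K)) hdvdP
          rwa [map_sub, Polynomial.aeval_X, Polynomial.aeval_C,
            MvPolynomial.algebraMap_eq] at this
        rw [heq] at hdvd
        have hdvdGn : (X 0 ^ a * X 1 ^ b - MvPolynomial.C x : MvPolynomial (Fin 2) K) ∣ G ^ n :=
          hCc.dvd_mul_left.mp hdvd
        have hdvdG := hprime.dvd_of_dvd_pow hdvdGn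
        obtain ⟨t, ht⟩ := hdvdG
        rcases hG.isUnit_or_isUnit ht with h | h
        · exact absurd h hprime.not_unit
        · obtain ⟨tu, rfl⟩ := h
          exact ⟨tu, ht.symm⟩
      -- all roots are equal
      obtain ⟨ξ₀, hξ₀⟩ := Multiset.card_pos_iff_exists_mem.mp (by rw [hcard]; omega)
      have hallroots : ∀ x ∈ P.roots, x = ξ₀ := by
        intro x hx
        have h1 := (assoc x hx).trans (assoc ξ₀ hξ₀).symm
        have hdvd : (X 0 ^ a * X 1 ^ b - MvPolynomial.C x : MvPolynomial (Fin 2) K)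
            ∣ MvPolynomial.C (ξ₀ - x) := by
          have h2 := h1.dvd
          have h3 : (X 0 ^ a * X 1 ^ b - MvPolynomial.C x : MvPolynomial (Fin 2) K)
              ∣ (X 0 ^ a * X 1 ^ b - MvPolynomial.C x)
                - (X 0 ^ a * X 1 ^ b - MvPolynomial.C ξ₀) := dvd_sub dvd_rfl h2
          have h4 : (X 0 ^ a * X 1 ^ b - MvPolynomial.C x : MvPolynomial (Fin 2) K)
              - (X 0 ^ a * X 1 ^ b - MvPolynomial.C ξ₀) = MvPolynomial.C (ξ₀ - x) := by
            rw [map_sub]; ring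
          rwa [h4] at h3
        by_contra hne
        have hunit : IsUnit (MvPolynomial.C (ξ₀ - x) : MvPolynomial (Fin 2) K) :=
          (isUnit_iff_ne_zero.mpr (sub_ne_zero_of_ne (Ne.symm hne))).map MvPolynomial.C
        exact (binom_prime a b hab (hroot_ne x hx)).not_unit (isUnit_of_dvd_unit hdvd hunit)
      have hroots : P.roots = Multiset.replicate P.natDegree ξ₀ :=
        Multiset.eq_replicate.mpr ⟨hcard, hallroots⟩
      refine ⟨P.leadingCoeff, ξ₀, Polynomial.leadingCoeff_ne_zero.mpr hPne,
        hroot_ne ξ₀ hξ₀, ?_⟩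
      conv_lhs => rw [hfact, hroots, Multiset.map_replicate, Multiset.prod_replicate]
    · rintro ⟨ν, ξ, hν, hξ, hform⟩
      exact ⟨ν, _, P.natDegree, hν, (binom_prime a b hab hξ).irreducible,
        aeval_form a b ν ξ P.natDegree P hform⟩
  · intro ν ξ hν hξ hform
    exact ⟨aeval_form a b ν ξ P.natDegree P hform, (binom_prime a b hab hξ).irreducible⟩
end
end

section
/- Let 𝒫 ⊂ K[t] be a finite set of nonconstant, pairwise coprime polynomials, let d_p, e_p ∈ ℤ for each p ∈ 𝒫, let α, β ∈ K^×, and set f := α·∏_{p∈𝒫} p^{d_p} and g := β·∏_{p∈𝒫} p^{e_p} ∈ K(t). Then the Minkowski sum identity Σ_{v∈K} R_{(ord_v(f), ord_v(g))} = Σ_{p∈𝒫} deg(p)·R_{(d_p, e_p)} holds (all but finitely many summands on the left equal {(0,0)}), and moreover (ord_∞(f), ord_∞(g)) = (−Σ_{p∈𝒫} d_p·deg(p), −Σ_{p∈𝒫} e_p·deg(p)). -/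
open Polynomial Pointwise

noncomputable section

variable {K : Type*} [Field K]

/-- Order of vanishing of a rational function at a point `v ∈ K`. -/
def ordAt (v : K) (h : RatFunc K) : ℤ :=
  (h.num.rootMultiplicity v : ℤ) - (h.denom.rootMultiplicity v : ℤ)

/-- Order of vanishing of a rational function at infinity. -/
def ordInf (h : RatFunc K) : ℤ :=
  (h.denom.natDegree : ℤ) - (h.num.natDegree : ℤ)

/-- The height of a rational function. -/
def eta (h : RatFunc K) : ℕ := max h.num.natDegree h.denom.natDegree

/-- A rational function is constant if it comes from `K`. -/
def IsConst (h : RatFunc K) : Prop := ∃ a : K, h = RatFunc.C a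

/-- `E ∈ K[X,Y]` is an implicit equation for the parametrization `(f,g)`. -/
def IsImplicitEq (f g : RatFunc K) (E : MvPolynomial (Fin 2) K) : Prop :=
  Irreducible E ∧ MvPolynomial.aeval ![f, g] E = 0

/-- Newton polygon of a bivariate polynomial: convex hull of its exponents. -/
def newton (E : MvPolynomial (Fin 2) K) : Set (ℝ × ℝ) :=
  convexHull ℝ ((fun d : Fin 2 →₀ ℕ => ((d 0 : ℝ), (d 1 : ℝ))) '' ↑E.support)

/-- The triangle `R_(m,n)` associated to a vector `(m,n) ∈ ℤ²`. -/
def Rtri (m n : ℤ) : Set (ℝ × ℝ) :=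
  if 0 ≤ m * n then
    convexHull ℝ {((0 : ℝ), (0 : ℝ)), (-(n : ℝ), 0), (0, -(m : ℝ))}
  else
    convexHull ℝ {((-(n : ℝ)), (-(m : ℝ))), (-(n : ℝ), 0), (0, -(m : ℝ))}

/-- Degree of the parametrization `(f,g)`, i.e. `[K(t) : K(f,g)]`. -/
def parDeg (f g : RatFunc K) : ℕ :=
  Module.finrank (IntermediateField.adjoin K {f, g}) (RatFunc K)

/-- Support function of a subset of `ℝ²`. -/
def supFn (Q : Set (ℝ × ℝ)) (w : ℝ × ℝ) : ℝ :=
  sSup ((fun u => w.1 * u.1 + w.2 * u.2) '' Q)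

namespace Stmt16Aux


theorem ordAt_mul (v : K) {x y : RatFunc K} (hx : x ≠ 0) (hy : y ≠ 0) :
    ordAt v (x * y) = ordAt v x + ordAt v y := by
  have h := congrArg (Polynomial.rootMultiplicity v) (RatFunc.num_denom_mul x y)
  have h1 : (x * y).num ≠ 0 := RatFunc.num_ne_zero (mul_ne_zero hx hy)
  have h2 : x.denom * y.denom ≠ 0 := mul_ne_zero x.denom_ne_zero y.denom_ne_zero
  have h3 : x.num ≠ 0 := RatFunc.num_ne_zero hx
  have h4 : y.num ≠ 0 := RatFunc.num_ne_zero hy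
  rw [Polynomial.rootMultiplicity_mul (mul_ne_zero h1 h2),
    Polynomial.rootMultiplicity_mul h2,
    Polynomial.rootMultiplicity_mul (mul_ne_zero (mul_ne_zero h3 h4) (x * y).denom_ne_zero),
    Polynomial.rootMultiplicity_mul (mul_ne_zero h3 h4)] at h
  unfold ordAt
  omega

theorem rootMultiplicity_one' (v : K) : Polynomial.rootMultiplicity v (1 : K[X]) = 0 :=
  Polynomial.rootMultiplicity_eq_zero (by simp [Polynomial.IsRoot])

theorem ordAt_one (v : K) : ordAt v (1 : RatFunc K) = 0 := by
  simp [ordAt, RatFunc.num_one, RatFunc.denom_one, rootMultiplicity_one']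

theorem ordAt_C (v : K) (a : K) : ordAt v (RatFunc.C a) = 0 := by
  simp [ordAt, RatFunc.num_C, RatFunc.denom_C, rootMultiplicity_one',
    Polynomial.rootMultiplicity_C]

theorem ordAt_algebraMap (v : K) (p : K[X]) :
    ordAt v (algebraMap K[X] (RatFunc K) p) = p.rootMultiplicity v := by
  simp [ordAt, RatFunc.num_algebraMap, RatFunc.denom_algebraMap, rootMultiplicity_one']


theorem D_pow (D : RatFunc K → ℤ) (hD1 : D 1 = 0)
    (hDmul : ∀ {x y : RatFunc K}, x ≠ 0 → y ≠ 0 → D (x * y) = D x + D y)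
    {x : RatFunc K} (hx : x ≠ 0) (n : ℕ) : D (x ^ n) = n * D x := by
  induction n with
  | zero => simpa using hD1
  | succ n ih =>
    rw [pow_succ, hDmul (pow_ne_zero _ hx) hx, ih]
    push_cast; ring

theorem D_inv (D : RatFunc K → ℤ) (hD1 : D 1 = 0)
    (hDmul : ∀ {x y : RatFunc K}, x ≠ 0 → y ≠ 0 → D (x * y) = D x + D y)
    {x : RatFunc K} (hx : x ≠ 0) : D x⁻¹ = -D x := by
  have h := hDmul hx (inv_ne_zero hx)
  rw [mul_inv_cancel₀ hx, hD1] at h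
  omega

theorem D_zpow (D : RatFunc K → ℤ) (hD1 : D 1 = 0)
    (hDmul : ∀ {x y : RatFunc K}, x ≠ 0 → y ≠ 0 → D (x * y) = D x + D y)
    {x : RatFunc K} (hx : x ≠ 0) (n : ℤ) : D (x ^ n) = n * D x := by
  cases n with
  | ofNat k => simpa using D_pow D hD1 hDmul hx k
  | negSucc k =>
    rw [zpow_negSucc, D_inv D hD1 hDmul (pow_ne_zero _ hx), D_pow D hD1 hDmul hx, Int.negSucc_eq]
    push_cast; ring

theorem D_prod (D : RatFunc K → ℤ) (hD1 : D 1 = 0)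
    (hDmul : ∀ {x y : RatFunc K}, x ≠ 0 → y ≠ 0 → D (x * y) = D x + D y)
    {ι : Type*} (s : Finset ι) (F : ι → RatFunc K)
    (hF : ∀ i ∈ s, F i ≠ 0) : D (∏ i ∈ s, F i) = ∑ i ∈ s, D (F i) := by
  classical
  induction s using Finset.cons_induction with
  | empty => simpa using hD1
  | cons a s ha ih =>
    rw [Finset.prod_cons, Finset.sum_cons,
      hDmul (hF a (Finset.mem_cons_self a s))
        (Finset.prod_ne_zero_iff.mpr fun i hi => hF i (Finset.mem_cons_of_mem hi)),
      ih fun i hi => hF i (Finset.mem_cons_of_mem hi)]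

theorem ordAt_formula (Ps : Finset (Polynomial K)) (hP : ∀ p ∈ Ps, p ≠ 0)
    (d : Polynomial K → ℤ) (α : K) (hα : α ≠ 0) (v : K) :
    ordAt v (RatFunc.C α * ∏ p ∈ Ps, (algebraMap (Polynomial K) (RatFunc K) p) ^ d p)
      = ∑ p ∈ Ps, d p * (p.rootMultiplicity v : ℤ) := by
  have hC : (RatFunc.C α : RatFunc K) ≠ 0 := by simpa using hα
  have hfac : ∀ p ∈ Ps, (algebraMap (Polynomial K) (RatFunc K) p) ^ d p ≠ 0 :=
    fun p hp => zpow_ne_zero _ (RatFunc.algebraMap_ne_zero (hP p hp))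
  have hprod : (∏ p ∈ Ps, (algebraMap (Polynomial K) (RatFunc K) p) ^ d p) ≠ 0 :=
    Finset.prod_ne_zero_iff.mpr hfac
  rw [ordAt_mul v hC hprod, ordAt_C,
    D_prod (ordAt v) (ordAt_one v) (fun hx hy => ordAt_mul v hx hy) Ps _ hfac, zero_add]
  refine Finset.sum_congr rfl fun p hp => ?_
  rw [D_zpow (ordAt v) (ordAt_one v) (fun hx hy => ordAt_mul v hx hy)
      (RatFunc.algebraMap_ne_zero (hP p hp)) (d p), ordAt_algebraMap]

theorem intDegree_formula (Ps : Finset (Polynomial K)) (hP : ∀ p ∈ Ps, p ≠ 0)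
    (d : Polynomial K → ℤ) (α : K) (hα : α ≠ 0) :
    RatFunc.intDegree (RatFunc.C α * ∏ p ∈ Ps, (algebraMap (Polynomial K) (RatFunc K) p) ^ d p)
      = ∑ p ∈ Ps, d p * (p.natDegree : ℤ) := by
  have hC : (RatFunc.C α : RatFunc K) ≠ 0 := by simpa using hα
  have hfac : ∀ p ∈ Ps, (algebraMap (Polynomial K) (RatFunc K) p) ^ d p ≠ 0 :=
    fun p hp => zpow_ne_zero _ (RatFunc.algebraMap_ne_zero (hP p hp))
  have hprod : (∏ p ∈ Ps, (algebraMap (Polynomial K) (RatFunc K) p) ^ d p) ≠ 0 :=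
    Finset.prod_ne_zero_iff.mpr hfac
  have hmul : ∀ {x y : RatFunc K}, x ≠ 0 → y ≠ 0 →
      RatFunc.intDegree (x * y) = RatFunc.intDegree x + RatFunc.intDegree y :=
    fun hx hy => RatFunc.intDegree_mul hx hy
  rw [RatFunc.intDegree_mul hC hprod, RatFunc.intDegree_C,
    D_prod RatFunc.intDegree RatFunc.intDegree_one hmul Ps _ hfac, zero_add]
  refine Finset.sum_congr rfl fun p hp => ?_
  rw [D_zpow RatFunc.intDegree RatFunc.intDegree_one hmul
      (RatFunc.algebraMap_ne_zero (hP p hp)) (d p), RatFunc.intDegree_polynomial]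



theorem Rtri_nonempty (m n : ℤ) : (Rtri m n).Nonempty := by
  unfold Rtri; split_ifs <;> exact ⟨_, subset_convexHull ℝ _ (Set.mem_insert _ _)⟩

theorem Rtri_convex (m n : ℤ) : Convex ℝ (Rtri m n) := by
  unfold Rtri; split_ifs <;> exact convex_convexHull ℝ _

theorem Rtri_zero : Rtri 0 0 = (0 : Set (ℝ × ℝ)) := by
  unfold Rtri
  rw [if_pos (by norm_num : (0:ℤ) ≤ 0 * 0)]
  norm_num
  exact Set.singleton_zero

theorem Rtri_smul (k : ℕ) (m n : ℤ) : Rtri (k * m) (k * n) = (k : ℝ) • Rtri m n := by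
  rcases Nat.eq_zero_or_pos k with hk | hk
  · subst hk
    simp only [Nat.cast_zero, zero_mul]
    rw [Rtri_zero, Set.zero_smul_set (Rtri_nonempty m n)]
  · have hkZ : (0 : ℤ) < (k : ℤ) := by exact_mod_cast hk
    have hsign : 0 ≤ ((k : ℤ) * m) * ((k : ℤ) * n) ↔ 0 ≤ m * n := by
      rw [mul_mul_mul_comm]
      exact mul_nonneg_iff_of_pos_left (mul_pos hkZ hkZ)
    unfold Rtri
    by_cases h : 0 ≤ m * n
    · rw [if_pos (hsign.mpr h), if_pos h, ← convexHull_smul]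
      congr 1
      simp only [Set.smul_set_insert, Set.smul_set_singleton, Prod.smul_mk, smul_eq_mul,
        mul_zero, mul_neg, smul_zero]
      push_cast
      ring_nf
    · rw [if_neg (fun hc => h (hsign.mp hc)), if_neg h, ← convexHull_smul]
      congr 1
      simp only [Set.smul_set_insert, Set.smul_set_singleton, Prod.smul_mk, smul_eq_mul,
        mul_zero, mul_neg, smul_zero]
      push_cast
      ring_nf

theorem sum_nsmul_set {ι : Type*} (s : Finset ι) (c : ι → ℕ) (Q : Set (ℝ × ℝ))
    (hQ : Convex ℝ Q) (hne : Q.Nonempty) :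
    ∑ i ∈ s, ((c i : ℝ)) • Q = ((∑ i ∈ s, c i : ℕ) : ℝ) • Q := by
  classical
  induction s using Finset.cons_induction with
  | empty => simp [Set.zero_smul_set hne]
  | cons a s ha ih =>
    rw [Finset.sum_cons, Finset.sum_cons, ih, Nat.cast_add,
      hQ.add_smul (by positivity) (by positivity)]


theorem not_both_roots {p q : Polynomial K} (h : IsCoprime p q) {v : K}
    (hp : p.IsRoot v) (hq : q.IsRoot v) : False := by
  obtain ⟨a, b, hab⟩ := h
  have h2 := congrArg (Polynomial.eval v) hab
  simp [Polynomial.IsRoot.eq_zero hp, Polynomial.IsRoot.eq_zero hq] at h2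

end Stmt16Aux

open Stmt16Aux in
/-- **Lemma (partial factorizations).** Let `Ps ⊂ K[t]` be a finite set of nonconstant,
pairwise coprime polynomials, `d_p, e_p ∈ ℤ`, `α, β ∈ K^×`, and
`f = α·∏ p^{d_p}`, `g = β·∏ p^{e_p}`.  Then
`Σ_{v∈K} R_{(ord_v f, ord_v g)} = Σ_{p∈Ps} deg(p)·R_{(d_p,e_p)}` (all but finitely many
summands on the left equal `{(0,0)}`) and
`(ord_∞ f, ord_∞ g) = (−Σ d_p·deg p, −Σ e_p·deg p)`. -/
theorem stmt16 {K : Type*} [Field K] [IsAlgClosed K]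
    (Ps : Finset (Polynomial K)) (hdeg : ∀ p ∈ Ps, 0 < p.natDegree)
    (hcop : ∀ p ∈ Ps, ∀ q ∈ Ps, p ≠ q → IsCoprime p q)
    (d e : Polynomial K → ℤ) (α β : K) (hα : α ≠ 0) (hβ : β ≠ 0)
    (f g : RatFunc K)
    (hf : f = RatFunc.C α * ∏ p ∈ Ps, (algebraMap (Polynomial K) (RatFunc K) p) ^ d p)
    (hg : g = RatFunc.C β * ∏ p ∈ Ps, (algebraMap (Polynomial K) (RatFunc K) p) ^ e p) :
    {v : K | (ordAt v f, ordAt v g) ≠ (0, 0)}.Finite ∧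
    (∑ᶠ v : K, Rtri (ordAt v f) (ordAt v g)) =
      ∑ p ∈ Ps, (p.natDegree : ℝ) • Rtri (d p) (e p) ∧
    (ordInf f, ordInf g) =
      (-(∑ p ∈ Ps, d p * p.natDegree), -(∑ p ∈ Ps, e p * p.natDegree)) := by
  classical
  have hPne : ∀ p ∈ Ps, p ≠ 0 := fun p hp h0 => by simpa [h0] using hdeg p hp
  have hof : ∀ v : K, ordAt v f = ∑ p ∈ Ps, d p * (p.rootMultiplicity v : ℤ) := fun v => by
    rw [hf]; exact ordAt_formula Ps hPne d α hα v
  have hog : ∀ v : K, ordAt v g = ∑ p ∈ Ps, e p * (p.rootMultiplicity v : ℤ) := fun v => by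
    rw [hg]; exact ordAt_formula Ps hPne e β hβ v
  set S : Finset K := Ps.biUnion (fun p => p.roots.toFinset) with hS
  have hout : ∀ v : K, v ∉ S → ∀ q ∈ Ps, q.rootMultiplicity v = 0 := by
    intro v hv q hq
    by_contra h0
    refine hv (Finset.mem_biUnion.mpr ⟨q, hq, Multiset.mem_toFinset.mpr ?_⟩)
    exact Polynomial.mem_roots'.mpr ⟨hPne q hq,
      (Polynomial.rootMultiplicity_pos (hPne q hq)).mp (Nat.pos_of_ne_zero h0)⟩
  have hvan : ∀ v : K, v ∉ S → ordAt v f = 0 ∧ ordAt v g = 0 := by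
    intro v hv
    constructor
    · rw [hof v]
      exact Finset.sum_eq_zero fun q hq => by rw [hout v hv q hq]; ring
    · rw [hog v]
      exact Finset.sum_eq_zero fun q hq => by rw [hout v hv q hq]; ring
  have hdisj : (↑Ps : Set (Polynomial K)).PairwiseDisjoint
      (fun p => p.roots.toFinset) := by
    intro p hp q hq hpq
    rw [Function.onFun, Finset.disjoint_left]
    intro v hvp hvq
    exact not_both_roots (hcop p hp q hq hpq)
      (Polynomial.mem_roots'.mp (Multiset.mem_toFinset.mp hvp)).2
      (Polynomial.mem_roots'.mp (Multiset.mem_toFinset.mp hvq)).2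
  refine ⟨S.finite_toSet.subset ?_, ?_, ?_⟩
  · intro v hv
    by_contra hvS
    obtain ⟨h1, h2⟩ := hvan v hvS
    exact hv (by simp [Set.mem_setOf_eq, h1, h2])
  · have hfin : (∑ᶠ v : K, Rtri (ordAt v f) (ordAt v g)) =
        ∑ v ∈ S, Rtri (ordAt v f) (ordAt v g) := by
      apply finsum_eq_sum_of_support_subset
      intro v hv
      simp only [Function.mem_support] at hv
      by_contra hvS
      obtain ⟨h1, h2⟩ := hvan v hvS
      exact hv (by rw [h1, h2, Rtri_zero])
    rw [hfin, hS, Finset.sum_biUnion hdisj]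
    refine Finset.sum_congr rfl fun p hp => ?_
    have hval : ∀ v ∈ p.roots.toFinset,
        ordAt v f = d p * (p.rootMultiplicity v : ℤ) ∧
        ordAt v g = e p * (p.rootMultiplicity v : ℤ) := by
      intro v hv
      have hrp : p.IsRoot v := (Polynomial.mem_roots'.mp (Multiset.mem_toFinset.mp hv)).2
      have hz : ∀ q ∈ Ps, q ≠ p → (q.rootMultiplicity v : ℤ) = 0 := by
        intro q hq hqp
        norm_cast
        by_contra h0
        exact not_both_roots (hcop q hq p hp hqp)
          ((Polynomial.rootMultiplicity_pos (hPne q hq)).mp (Nat.pos_of_ne_zero h0)) hrp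
      constructor
      · rw [hof v]
        exact Finset.sum_eq_single p (fun q hq hqp => by rw [hz q hq hqp]; ring)
          (fun h => absurd hp h)
      · rw [hog v]
        exact Finset.sum_eq_single p (fun q hq hqp => by rw [hz q hq hqp]; ring)
          (fun h => absurd hp h)
    calc ∑ v ∈ p.roots.toFinset, Rtri (ordAt v f) (ordAt v g)
        = ∑ v ∈ p.roots.toFinset, ((p.rootMultiplicity v : ℝ)) • Rtri (d p) (e p) := by
          refine Finset.sum_congr rfl fun v hv => ?_
          rw [(hval v hv).1, (hval v hv).2, mul_comm (d p), mul_comm (e p),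
            Rtri_smul (p.rootMultiplicity v) (d p) (e p)]
      _ = ((∑ v ∈ p.roots.toFinset, p.rootMultiplicity v : ℕ) : ℝ) • Rtri (d p) (e p) :=
          sum_nsmul_set _ _ _ (Rtri_convex _ _) (Rtri_nonempty _ _)
      _ = (p.natDegree : ℝ) • Rtri (d p) (e p) := by
          have hcount : ∑ v ∈ p.roots.toFinset, p.rootMultiplicity v = p.natDegree := by
            rw [Finset.sum_congr rfl fun v _ => (Polynomial.count_roots (a := v) p).symm,
              Multiset.toFinset_sum_count_eq]
            exact Polynomial.splits_iff_card_roots.mp (IsAlgClosed.splits p)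
          rw [hcount]
  · have hneg : ∀ h : RatFunc K, ordInf h = -RatFunc.intDegree h := fun h => by
      unfold ordInf RatFunc.intDegree; ring
    rw [Prod.mk.injEq]
    constructor
    · rw [hneg f, hf, intDegree_formula Ps hPne d α hα]
    · rw [hneg g, hg, intDegree_formula Ps hPne e β hβ]
end
end
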